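/- A prime p can be written as p = a² − 11b² with integers a, b if and only if p ≡ j² (mod 44) for some j ∈ {1, 3, 5, 7, 9}. -/

import Mathlib

-- irrationality of sqrt 11, Nat version
lemma nat_irr (m n : ℕ) (h : m^2 = 11 * n^2) : n = 0 := by
  by_contra hn
  have hm : m ≠ 0 := by
    intro h0; rw [h0] at h; simp at h; omega
  have h1 : (m^2).factorization 11 = 2 * m.factorization 11 := by
    simp [Nat.factorization_pow]
  have h2 : ((11 * n^2).factorization) 11 = 1 + 2 * n.factorization 11 := by
    rw [Nat.factorization_mul (by norm_num) (pow_ne_zero _ hn)]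
    simp [Nat.factorization_pow, Nat.Prime.factorization (by norm_num : Nat.Prime 11)]
  rw [h] at h1
  omega

lemma int_irr (X Y : ℤ) (h : X^2 = 11 * Y^2) : Y = 0 := by
  have : X.natAbs ^ 2 = 11 * Y.natAbs ^ 2 := by
    have := congrArg Int.natAbs h
    simpa [Int.natAbs_mul, Int.natAbs_pow] using this
  have := nat_irr _ _ this
  omega


lemma thue (p : ℕ) (hp : p.Prime) (r : ZMod p) (hr : r^2 = 11) :
    ∃ X Y : ℤ, X^2 - 11*Y^2 ≠ 0 ∧ X^2 < (p:ℤ) ∧ Y^2 < (p:ℤ) ∧ (p:ℤ) ∣ X^2 - 11*Y^2 := by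
  haveI : Fact p.Prime := ⟨hp⟩
  set s := Nat.sqrt p with hs
  have hslt : s^2 < p := by
    rcases Nat.lt_or_ge (s^2) p with h | h
    · exact h
    · exfalso
      have h1 : s^2 ≤ p := Nat.sqrt_le' p
      have h2 : s^2 = p := le_antisymm h1 h
      have hdvd : s ∣ p := ⟨s, by rw [← h2]; ring⟩
      rcases (Nat.Prime.eq_one_or_self_of_dvd hp s hdvd) with h3 | h3
      · rw [h3] at h2; simp at h2; exact absurd h2.symm hp.one_lt.ne'
      · rw [h3] at h2
        nlinarith [hp.one_lt]
  have hcard : p < (s+1)^2 := Nat.lt_succ_sqrt' p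
  -- pigeonhole
  have hmaps : ∀ a ∈ Finset.range (s+1) ×ˢ Finset.range (s+1),
      ((a.1 : ZMod p) - r * a.2) ∈ (Finset.univ : Finset (ZMod p)) := by
    intro a _; exact Finset.mem_univ _
  have hlt : (Finset.univ : Finset (ZMod p)).card <
      ((Finset.range (s+1) ×ˢ Finset.range (s+1)).card) := by
    rw [Finset.card_univ, ZMod.card, Finset.card_product, Finset.card_range]
    nlinarith
  obtain ⟨a, ha, b, hb, hab, heq⟩ :=
    Finset.exists_ne_map_eq_of_card_lt_of_maps_to hlt hmaps
  rw [Finset.mem_product, Finset.mem_range, Finset.mem_range] at ha hb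
  refine ⟨(a.1 : ℤ) - b.1, (a.2 : ℤ) - b.2, ?_, ?_, ?_, ?_⟩
  · intro h0
    have hX2 : ((a.1:ℤ) - b.1)^2 = 11*((a.2:ℤ) - b.2)^2 := by linarith
    have hY : ((a.2 : ℤ) - b.2) = 0 := int_irr _ _ hX2
    have hX : ((a.1 : ℤ) - b.1) = 0 := by
      rw [hY] at hX2; simpa [pow_eq_zero_iff] using hX2
    apply hab
    have h1 : a.1 = b.1 := by omega
    have h2 : a.2 = b.2 := by omega
    exact Prod.ext h1 h2
  · have h1 : ((a.1:ℤ) - b.1)^2 ≤ (s:ℤ)^2 := by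
      have := ha.1; have := hb.1
      have : -(s:ℤ) ≤ (a.1:ℤ) - b.1 ∧ ((a.1:ℤ) - b.1) ≤ s := by
        constructor <;> omega
      nlinarith [this.1, this.2]
    calc ((a.1:ℤ) - b.1)^2 ≤ (s:ℤ)^2 := h1
      _ < p := by exact_mod_cast hslt
  · have h1 : ((a.2:ℤ) - b.2)^2 ≤ (s:ℤ)^2 := by
      have : -(s:ℤ) ≤ (a.2:ℤ) - b.2 ∧ ((a.2:ℤ) - b.2) ≤ s := by
        constructor <;> omega
      nlinarith [this.1, this.2]
    calc ((a.2:ℤ) - b.2)^2 ≤ (s:ℤ)^2 := h1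
      _ < p := by exact_mod_cast hslt
  · rw [← ZMod.intCast_zmod_eq_zero_iff_dvd]
    push_cast
    have hX : ((a.1:ZMod p) - b.1) = r * ((a.2 : ZMod p) - b.2) := by
      have : (a.1 : ZMod p) - r * a.2 = (b.1 : ZMod p) - r * b.2 := heq
      ring_nf
      ring_nf at this
      linear_combination this
    rw [sub_eq_zero]
    calc ((a.1:ZMod p) - b.1)^2 = r^2 * ((a.2:ZMod p) - b.2)^2 := by rw [hX]; ring
      _ = 11 * ((a.2:ZMod p) - (b.2:ZMod p))^2 := by rw [hr]

-- decide helpers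
lemma dec4 : ∀ x y : ZMod 4, 11*y^2 - x^2 ≠ 1 ∧ 11*y^2 - x^2 ≠ 5 ∧ 11*y^2 - x^2 ≠ 9 := by decide
lemma dec11 : ∀ x y q : ZMod 11, (q=1∨q=3∨q=4∨q=5∨q=9) → 11*y^2 - x^2 ≠ 3*q := by decide
lemma dec8 : ∀ x y q : ZMod 8, (q=1∨q=5) → 11*y^2 - x^2 ≠ 6*q := by decide
lemma dec4even : ∀ x y : ZMod 4, 11*y^2 - x^2 = 0 → (x = 0 ∨ x = 2) ∧ (y = 0 ∨ y = 2) := by decide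
lemma dec2 : ∀ x y : ZMod 2, 11*y^2 - x^2 = 0 → (3*x+11*y = 0 ∧ x+3*y = 0 ∧ x+11*y = 0 ∧ x+y = 0) := by decide
lemma dec7 : ∀ x y : ZMod 7, 11*y^2 - x^2 = 0 → (2*x+11*y = 0 ∧ x+2*y = 0) ∨ (2*x-11*y = 0 ∧ x-2*y = 0) := by decide
lemma dec5 : ∀ x y : ZMod 5, 11*y^2 - x^2 = 0 → (x+11*y = 0 ∧ x+y = 0) ∨ (x-11*y = 0 ∧ x-y = 0) := by decide

-- k = 2 construction
lemma case2 (p : ℕ) (X Y : ℤ) (E : 11*Y^2 - X^2 = 2*(p:ℤ)) :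
    ∃ a b : ℤ, (p:ℤ) = a^2 - 11*b^2 := by
  have E2 : 11*((Y:ZMod 2))^2 - ((X:ZMod 2))^2 = 0 := by
    have := congrArg (fun z : ℤ => (z : ZMod 2)) E
    push_cast at this
    rw [this, show ((2:ZMod 2)) = 0 from rfl, zero_mul]
  obtain ⟨h1, h2, -, -⟩ := dec2 _ _ E2
  have d1 : (2:ℤ) ∣ 3*X+11*Y := by
    have := (ZMod.intCast_zmod_eq_zero_iff_dvd (3*X+11*Y) 2).mp (by push_cast; exact h1)
    exact_mod_cast this
  have d2 : (2:ℤ) ∣ X+3*Y := by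
    have := (ZMod.intCast_zmod_eq_zero_iff_dvd (X+3*Y) 2).mp (by push_cast; exact h2)
    exact_mod_cast this
  obtain ⟨A, hA⟩ := d1
  obtain ⟨B, hB⟩ := d2
  refine ⟨A, B, ?_⟩
  have key : (3*X+11*Y)^2 - 11*(X+3*Y)^2 = 4*(p:ℤ) := by linear_combination 2*E
  rw [hA, hB] at key
  nlinarith [key]

-- k = 7 construction
lemma case7 (p : ℕ) (X Y : ℤ) (E : 11*Y^2 - X^2 = 7*(p:ℤ)) :
    ∃ a b : ℤ, (p:ℤ) = a^2 - 11*b^2 := by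
  have E7 : 11*((Y:ZMod 7))^2 - ((X:ZMod 7))^2 = 0 := by
    have := congrArg (fun z : ℤ => (z : ZMod 7)) E
    push_cast at this
    rw [this, show ((7:ZMod 7)) = 0 from rfl, zero_mul]
  rcases dec7 _ _ E7 with ⟨h1, h2⟩ | ⟨h1, h2⟩
  · have d1 : (7:ℤ) ∣ 2*X+11*Y := by
      have := (ZMod.intCast_zmod_eq_zero_iff_dvd (2*X+11*Y) 7).mp (by push_cast; exact h1)
      exact_mod_cast this
    have d2 : (7:ℤ) ∣ X+2*Y := by
      have := (ZMod.intCast_zmod_eq_zero_iff_dvd (X+2*Y) 7).mp (by push_cast; exact h2)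
      exact_mod_cast this
    obtain ⟨A, hA⟩ := d1
    obtain ⟨B, hB⟩ := d2
    refine ⟨A, B, ?_⟩
    have key : (2*X+11*Y)^2 - 11*(X+2*Y)^2 = 49*(p:ℤ) := by linear_combination 7*E
    rw [hA, hB] at key
    nlinarith [key]
  · have d1 : (7:ℤ) ∣ 2*X-11*Y := by
      have := (ZMod.intCast_zmod_eq_zero_iff_dvd (2*X-11*Y) 7).mp (by push_cast; exact h1)
      exact_mod_cast this
    have d2 : (7:ℤ) ∣ X-2*Y := by
      have := (ZMod.intCast_zmod_eq_zero_iff_dvd (X-2*Y) 7).mp (by push_cast; exact h2)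
      exact_mod_cast this
    obtain ⟨A, hA⟩ := d1
    obtain ⟨B, hB⟩ := d2
    refine ⟨A, B, ?_⟩
    have key : (2*X-11*Y)^2 - 11*(X-2*Y)^2 = 49*(p:ℤ) := by linear_combination 7*E
    rw [hA, hB] at key
    nlinarith [key]

-- k = 10 construction
lemma case10 (p : ℕ) (X Y : ℤ) (E : 11*Y^2 - X^2 = 10*(p:ℤ)) :
    ∃ a b : ℤ, (p:ℤ) = a^2 - 11*b^2 := by
  have E5 : 11*((Y:ZMod 5))^2 - ((X:ZMod 5))^2 = 0 := by
    have := congrArg (fun z : ℤ => (z : ZMod 5)) E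
    push_cast at this
    rw [this, show ((10:ZMod 5)) = 0 from rfl, zero_mul]
  have E2 : 11*((Y:ZMod 2))^2 - ((X:ZMod 2))^2 = 0 := by
    have := congrArg (fun z : ℤ => (z : ZMod 2)) E
    push_cast at this
    rw [this, show ((10:ZMod 2)) = 0 from rfl, zero_mul]
  obtain ⟨-, -, g1, g2⟩ := dec2 _ _ E2
  have e1 : (2:ℤ) ∣ X+11*Y := by
    have := (ZMod.intCast_zmod_eq_zero_iff_dvd (X+11*Y) 2).mp (by push_cast; exact g1)
    exact_mod_cast this
  have e2 : (2:ℤ) ∣ X+Y := by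
    have := (ZMod.intCast_zmod_eq_zero_iff_dvd (X+Y) 2).mp (by push_cast; exact g2)
    exact_mod_cast this
  have e1' : (2:ℤ) ∣ X-11*Y := by omega
  have e2' : (2:ℤ) ∣ X-Y := by omega
  rcases dec5 _ _ E5 with ⟨h1, h2⟩ | ⟨h1, h2⟩
  · have d1 : (5:ℤ) ∣ X+11*Y := by
      have := (ZMod.intCast_zmod_eq_zero_iff_dvd (X+11*Y) 5).mp (by push_cast; exact h1)
      exact_mod_cast this
    have d2 : (5:ℤ) ∣ X+Y := by
      have := (ZMod.intCast_zmod_eq_zero_iff_dvd (X+Y) 5).mp (by push_cast; exact h2)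
      exact_mod_cast this
    have f1 : (10:ℤ) ∣ X+11*Y := by omega
    have f2 : (10:ℤ) ∣ X+Y := by omega
    obtain ⟨A, hA⟩ := f1
    obtain ⟨B, hB⟩ := f2
    refine ⟨A, B, ?_⟩
    have key : (X+11*Y)^2 - 11*(X+Y)^2 = 100*(p:ℤ) := by linear_combination 10*E
    rw [hA, hB] at key
    nlinarith [key]
  · have d1 : (5:ℤ) ∣ X-11*Y := by
      have := (ZMod.intCast_zmod_eq_zero_iff_dvd (X-11*Y) 5).mp (by push_cast; exact h1)
      exact_mod_cast this
    have d2 : (5:ℤ) ∣ X-Y := by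
      have := (ZMod.intCast_zmod_eq_zero_iff_dvd (X-Y) 5).mp (by push_cast; exact h2)
      exact_mod_cast this
    have f1 : (10:ℤ) ∣ X-11*Y := by omega
    have f2 : (10:ℤ) ∣ X-Y := by omega
    obtain ⟨A, hA⟩ := f1
    obtain ⟨B, hB⟩ := f2
    refine ⟨A, B, ?_⟩
    have key : (X-11*Y)^2 - 11*(X-Y)^2 = 100*(p:ℤ) := by linear_combination 10*E
    rw [hA, hB] at key
    nlinarith [key]

lemma even_of_zmod4 (X : ℤ) (h : (X : ZMod 4) = 0 ∨ (X : ZMod 4) = 2) : 2 ∣ X := by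
  rcases h with h | h
  · have := (ZMod.intCast_zmod_eq_zero_iff_dvd X 4).mp h
    omega
  · have h2 : ((X - 2 : ℤ) : ZMod 4) = 0 := by push_cast; rw [h]; ring
    have := (ZMod.intCast_zmod_eq_zero_iff_dvd (X-2) 4).mp h2
    omega

lemma descent (p : ℕ) (h4 : p % 4 = 1)
    (h11 : p % 11 = 1 ∨ p % 11 = 3 ∨ p % 11 = 4 ∨ p % 11 = 5 ∨ p % 11 = 9)
    (k : ℤ) (hk1 : 1 ≤ k) (hk10 : k ≤ 10) (X Y : ℤ)
    (E : 11*Y^2 - X^2 = k*(p:ℤ)) : ∃ a b : ℤ, (p:ℤ) = a^2 - 11*b^2 := by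
  have hp4 : ((p:ℕ) : ZMod 4) = 1 := by
    rw [← ZMod.natCast_mod p 4, h4]; norm_num
  have hp8 : ((p:ℕ) : ZMod 8) = 1 ∨ ((p:ℕ) : ZMod 8) = 5 := by
    have : p % 8 = 1 ∨ p % 8 = 5 := by omega
    rcases this with h | h
    · left; rw [← ZMod.natCast_mod p 8, h]; norm_num
    · right; rw [← ZMod.natCast_mod p 8, h]; norm_num
  have hp11 : ((p:ℕ) : ZMod 11) = 1 ∨ ((p:ℕ) : ZMod 11) = 3 ∨ ((p:ℕ) : ZMod 11) = 4
      ∨ ((p:ℕ) : ZMod 11) = 5 ∨ ((p:ℕ) : ZMod 11) = 9 := by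
    rcases h11 with h | h | h | h | h
    · exact Or.inl (by rw [← ZMod.natCast_mod p 11, h]; norm_num)
    · exact Or.inr (Or.inl (by rw [← ZMod.natCast_mod p 11, h]; norm_num))
    · exact Or.inr (Or.inr (Or.inl (by rw [← ZMod.natCast_mod p 11, h]; norm_num)))
    · exact Or.inr (Or.inr (Or.inr (Or.inl (by rw [← ZMod.natCast_mod p 11, h]; norm_num))))
    · exact Or.inr (Or.inr (Or.inr (Or.inr (by rw [← ZMod.natCast_mod p 11, h]; norm_num))))
  interval_cases k
  · -- k = 1
    exfalso
    have E4 : 11*((Y:ZMod 4))^2 - ((X:ZMod 4))^2 = 1 := by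
      have := congrArg (fun z : ℤ => (z : ZMod 4)) E
      push_cast at this
      rw [this, hp4]; ring
    exact (dec4 _ _).1 E4
  · -- k = 2
    exact case2 p X Y (by linarith)
  · -- k = 3
    exfalso
    have E11 : 11*((Y:ZMod 11))^2 - ((X:ZMod 11))^2 = 3 * ((p:ℕ) : ZMod 11) := by
      have := congrArg (fun z : ℤ => (z : ZMod 11)) E
      push_cast at this
      rw [this]
    exact dec11 _ _ _ hp11 E11
  · -- k = 4
    exfalso
    have E4 : 11*((Y:ZMod 4))^2 - ((X:ZMod 4))^2 = 0 := by
      have := congrArg (fun z : ℤ => (z : ZMod 4)) E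
      push_cast at this
      rw [this, show ((4:ZMod 4)) = 0 from rfl, zero_mul]
    obtain ⟨hx, hy⟩ := dec4even _ _ E4
    obtain ⟨X', hX'⟩ := even_of_zmod4 X hx
    obtain ⟨Y', hY'⟩ := even_of_zmod4 Y hy
    subst hX' hY'
    have E' : 11*Y'^2 - X'^2 = (p:ℤ) := by nlinarith [E]
    have E4' : 11*((Y':ZMod 4))^2 - ((X':ZMod 4))^2 = 1 := by
      have := congrArg (fun z : ℤ => (z : ZMod 4)) E'
      push_cast at this
      rw [this, hp4]
    exact (dec4 _ _).1 E4'
  · -- k = 5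
    exfalso
    have E4 : 11*((Y:ZMod 4))^2 - ((X:ZMod 4))^2 = 5 := by
      have := congrArg (fun z : ℤ => (z : ZMod 4)) E
      push_cast at this
      rw [this, hp4]; ring
    exact (dec4 _ _).2.1 E4
  · -- k = 6
    exfalso
    have E8 : 11*((Y:ZMod 8))^2 - ((X:ZMod 8))^2 = 6 * ((p:ℕ) : ZMod 8) := by
      have := congrArg (fun z : ℤ => (z : ZMod 8)) E
      push_cast at this
      rw [this]
    exact dec8 _ _ _ hp8 E8
  · -- k = 7
    exact case7 p X Y (by linarith)
  · -- k = 8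
    have E4 : 11*((Y:ZMod 4))^2 - ((X:ZMod 4))^2 = 0 := by
      have := congrArg (fun z : ℤ => (z : ZMod 4)) E
      push_cast at this
      rw [this, show ((8:ZMod 4)) = 0 from rfl, zero_mul]
    obtain ⟨hx, hy⟩ := dec4even _ _ E4
    obtain ⟨X', hX'⟩ := even_of_zmod4 X hx
    obtain ⟨Y', hY'⟩ := even_of_zmod4 Y hy
    subst hX' hY'
    have E' : 11*Y'^2 - X'^2 = 2*(p:ℤ) := by nlinarith [E]
    exact case2 p X' Y' E'
  · -- k = 9
    exfalso
    have E4 : 11*((Y:ZMod 4))^2 - ((X:ZMod 4))^2 = 9 := by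
      have := congrArg (fun z : ℤ => (z : ZMod 4)) E
      push_cast at this
      rw [this, hp4]; ring
    exact (dec4 _ _).2.2 E4
  · -- k = 10
    exact case10 p X Y (by linarith)

lemma qr11 : ∀ x : ZMod 11, x^2 = 0 ∨ x^2 = 1 ∨ x^2 = 3 ∨ x^2 = 4 ∨ x^2 = 5 ∨ x^2 = 9 := by decide
lemma dec4f : ∀ x y : ZMod 4, x^2 - 11*y^2 ≠ 3 := by decide

lemma mod_of_cast (n p v : ℕ) (hn : 0 < n) (hv : v < n)
    (h : ((p:ℕ) : ZMod n) = ((v:ℕ) : ZMod n)) : p % n = v := by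
  haveI : NeZero n := ⟨hn.ne'⟩
  have h2 : ((p % n : ℕ) : ZMod n) = ((v:ℕ) : ZMod n) := by rw [ZMod.natCast_mod]; exact h
  have h3 := congrArg ZMod.val h2
  rwa [ZMod.val_cast_of_lt (Nat.mod_lt _ hn), ZMod.val_cast_of_lt hv] at h3

lemma dec11neg : ∀ b : ZMod 11, (1:ZMod 11) ≠ 11*b^2 - b^2*11^2 := by decide

lemma forward (p : ℕ) (hp : p.Prime) (a b : ℤ) (hab : (p:ℤ) = a^2 - 11*b^2) :
    p % 4 = 1 ∧ (p % 11 = 1 ∨ p % 11 = 3 ∨ p % 11 = 4 ∨ p % 11 = 5 ∨ p % 11 = 9) := by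
  have hcast11 : ((p:ℕ) : ZMod 11) = ((a : ZMod 11))^2 := by
    have := congrArg (fun z : ℤ => (z : ZMod 11)) hab
    push_cast at this
    rw [this, show ((11:ZMod 11)) = 0 from rfl]; ring
  -- p ≠ 11
  have hp11 : p ≠ 11 := by
    intro h
    subst h
    push_cast at hab
    have h11a : (11:ℤ) ∣ a := by
      have hd : (11:ℤ) ∣ a^2 := ⟨1 + b^2, by linarith⟩
      exact (Int.Prime.dvd_pow' (by norm_num) hd)
    obtain ⟨a1, ha1⟩ := h11a
    subst ha1
    have key : (1:ℤ) = 11*a1^2 - b^2 := by nlinarith [hab]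
    have := congrArg (fun z : ℤ => (z : ZMod 11)) key
    push_cast at this
    have h0 : (1:ZMod 11) = 11*(a1:ZMod 11)^2 - (b:ZMod 11)^2 := by
      rw [show (1:ZMod 11) = ((1:ℤ):ZMod 11) by simp, key]; push_cast; ring
    have : (1:ZMod 11) = -((b:ZMod 11))^2 := by
      rw [h0, show ((11:ZMod 11)) = 0 from rfl]; ring
    revert this
    have : ∀ c : ZMod 11, (1:ZMod 11) ≠ -c^2 := by decide
    exact this _
  -- p % 11 value
  have hq := qr11 ((a : ZMod 11))
  have h11 : p % 11 = 1 ∨ p % 11 = 3 ∨ p % 11 = 4 ∨ p % 11 = 5 ∨ p % 11 = 9 := by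
    have h0 : p % 11 ≠ 0 := by
      intro h
      have : (11:ℕ) ∣ p := by omega
      exact hp11 ((Nat.prime_dvd_prime_iff_eq (by norm_num) hp).mp this).symm
    rcases hq with h | h | h | h | h | h
    · exfalso; apply h0
      exact mod_of_cast 11 p 0 (by norm_num) (by norm_num) (by rw [hcast11, h]; norm_num)
    · exact Or.inl (mod_of_cast 11 p 1 (by norm_num) (by norm_num) (by rw [hcast11, h]; norm_num))
    · exact Or.inr (Or.inl (mod_of_cast 11 p 3 (by norm_num) (by norm_num) (by rw [hcast11, h]; norm_num)))
    · exact Or.inr (Or.inr (Or.inl (mod_of_cast 11 p 4 (by norm_num) (by norm_num) (by rw [hcast11, h]; norm_num))))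
    · exact Or.inr (Or.inr (Or.inr (Or.inl (mod_of_cast 11 p 5 (by norm_num) (by norm_num) (by rw [hcast11, h]; norm_num)))))
    · exact Or.inr (Or.inr (Or.inr (Or.inr (mod_of_cast 11 p 9 (by norm_num) (by norm_num) (by rw [hcast11, h]; norm_num)))))
  -- p odd
  have hne2 : p ≠ 2 := by intro h; subst h; omega
  have hodd : p % 2 = 1 := by
    rcases hp.eq_two_or_odd with h | h
    · exact absurd h hne2
    · exact h
  -- p % 4 = 1
  have h4 : p % 4 ≠ 3 := by
    intro h
    have hc : ((p:ℕ) : ZMod 4) = ((3:ℕ) : ZMod 4) := by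
      rw [← ZMod.natCast_mod p 4, h]
    have hcast4 : ((p:ℕ) : ZMod 4) = ((a : ZMod 4))^2 - 11*((b : ZMod 4))^2 := by
      have := congrArg (fun z : ℤ => (z : ZMod 4)) hab
      push_cast at this
      rw [this]
    rw [hc] at hcast4
    exact dec4f _ _ (by rw [← hcast4]; norm_num)
  exact ⟨by omega, h11⟩

theorem stmt_12 (p : ℕ) (hp : p.Prime) :
    (∃ a b : ℤ, (p : ℤ) = a ^ 2 - 11 * b ^ 2) ↔
    (∃ j ∈ ({1, 3, 5, 7, 9} : Finset ℕ), p % 44 = j ^ 2 % 44) := by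
  constructor
  · rintro ⟨a, b, hab⟩
    obtain ⟨h4, h11⟩ := forward p hp a b (by linarith [hab])
    rcases h11 with h | h | h | h | h
    · exact ⟨1, by decide, by norm_num; omega⟩
    · exact ⟨5, by decide, by norm_num; omega⟩
    · exact ⟨9, by decide, by norm_num; omega⟩
    · exact ⟨7, by decide, by norm_num; omega⟩
    · exact ⟨3, by decide, by norm_num; omega⟩
  · rintro ⟨j, hj, hmod⟩
    have h44 : p % 44 = 1 ∨ p % 44 = 9 ∨ p % 44 = 25 ∨ p % 44 = 5 ∨ p % 44 = 37 := by
      fin_cases hj <;> norm_num at hmod <;> omega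
    have h4 : p % 4 = 1 := by omega
    have h11 : p % 11 = 1 ∨ p % 11 = 3 ∨ p % 11 = 4 ∨ p % 11 = 5 ∨ p % 11 = 9 := by omega
    have hp2 : p ≠ 2 := by omega
    have hp11 : p ≠ 11 := by omega
    have ha0 : ((p:ℕ) : ZMod 11) ≠ 0 := by
      intro h0
      have hdvd := (ZMod.natCast_eq_zero_iff p 11).mp h0
      exact hp11 ((Nat.prime_dvd_prime_iff_eq (by norm_num) hp).mp hdvd).symm
    have hsq11 : IsSquare ((p:ℕ) : ZMod 11) := by
      rcases h11 with h | h | h | h | h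
      · have hc : ((p:ℕ) : ZMod 11) = ((p % 11 : ℕ) : ZMod 11) := (ZMod.natCast_mod p 11).symm
        rw [hc, h]
        exact ⟨1, by decide⟩
      · have hc : ((p:ℕ) : ZMod 11) = ((p % 11 : ℕ) : ZMod 11) := (ZMod.natCast_mod p 11).symm
        rw [hc, h]
        exact ⟨5, by decide⟩
      · have hc : ((p:ℕ) : ZMod 11) = ((p % 11 : ℕ) : ZMod 11) := (ZMod.natCast_mod p 11).symm
        rw [hc, h]
        exact ⟨2, by decide⟩
      · have hc : ((p:ℕ) : ZMod 11) = ((p % 11 : ℕ) : ZMod 11) := (ZMod.natCast_mod p 11).symm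
        rw [hc, h]
        exact ⟨4, by decide⟩
      · have hc : ((p:ℕ) : ZMod 11) = ((p % 11 : ℕ) : ZMod 11) := (ZMod.natCast_mod p 11).symm
        rw [hc, h]
        exact ⟨3, by decide⟩
    haveI : Fact p.Prime := ⟨hp⟩
    haveI : Fact (Nat.Prime 11) := ⟨by norm_num⟩
    have hL1 : legendreSym 11 p = 1 := (legendreSym.eq_one_iff' 11 ha0).mpr hsq11
    have hrec := legendreSym.quadratic_reciprocity_one_mod_four (p := p) (q := 11)
      h4 (by norm_num)
    rw [hrec] at hL1
    have ha0' : ((11:ℕ) : ZMod p) ≠ 0 := by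
      intro h0
      have hdvd := (ZMod.natCast_eq_zero_iff 11 p).mp h0
      exact hp11 ((Nat.prime_dvd_prime_iff_eq hp (by norm_num)).mp hdvd)
    have hsq : IsSquare ((11:ℕ) : ZMod p) := (legendreSym.eq_one_iff' p ha0').mp hL1
    obtain ⟨r, hr⟩ := hsq
    have hr2 : r^2 = (11 : ZMod p) := by rw [sq, ← hr]; push_cast; norm_num
    obtain ⟨X, Y, hne, hX, hY, hdvd⟩ := thue p hp r hr2
    obtain ⟨t, ht⟩ := hdvd
    have hp0 : (0:ℤ) < p := by exact_mod_cast hp.pos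
    have ht1 : t ≤ 0 := by nlinarith [sq_nonneg Y]
    have ht2 : -11 < t := by nlinarith [sq_nonneg X]
    have ht0 : t ≠ 0 := by intro h; rw [h, mul_zero] at ht; exact hne ht
    exact descent p h4 h11 (-t) (by omega) (by omega) X Y (by linear_combination -ht)
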